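/- Let E be the Choi operator of a channel on a d-dimensional system that is an inner point of the set of channels (so λ_min(E) = λ₁ > 0), with spectral decomposition E = Σ_k λ_k P_k (λ₁ < λ₂ ≤ …). Suppose the eigenspace P₁ of λ₁ contains no maximally entangled state. Then for every maximally entangled unit vector |φ⟩, writing |φ⟩ = √α|v⟩ + √(1-α)|v⊥⟩ with P₁|v⟩ = |v⟩, P₁|v⊥⟩ = 0 and α < 1, one has E - t·|φ⟩⟨φ| ≥ 0 for t = λ₁λ₂/(λ₁ + (λ₂-λ₁)α), and this t is strictly greater than λ₁. -/

import Mathlib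

open Matrix
open scoped ComplexOrder

set_option linter.unusedSectionVars false

section Aux
variable {ι : Type*} [Fintype ι] [DecidableEq ι]

lemma aux_vecMulVec_mulVec (w u x : ι → ℂ) : vecMulVec w u *ᵥ x = (u ⬝ᵥ x) • w := by
  funext i
  simp only [mulVec, dotProduct, vecMulVec_apply, Pi.smul_apply, smul_eq_mul, Finset.sum_mul]
  exact Finset.sum_congr rfl fun j _ => by ring

lemma aux_mul_vecMulVec (A : Matrix ι ι ℂ) (w u : ι → ℂ) :
    A * vecMulVec w u = vecMulVec (A *ᵥ w) u := by
  ext i j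
  simp only [mul_apply, vecMulVec_apply, mulVec, dotProduct, Finset.sum_mul]
  exact Finset.sum_congr rfl fun k _ => by ring

lemma aux_vecMulVec_mul (w u : ι → ℂ) (A : Matrix ι ι ℂ) :
    vecMulVec w u * A = vecMulVec w (u ᵥ* A) := by
  ext i j
  simp only [mul_apply, vecMulVec_apply, vecMul, dotProduct, Finset.mul_sum]
  exact Finset.sum_congr rfl fun k _ => by ring

lemma aux_outer_herm (v : ι → ℂ) : (vecMulVec v (star v)).IsHermitian := by
  unfold Matrix.IsHermitian
  ext i j
  simp [conjTranspose_apply, vecMulVec_apply, mul_comm]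

lemma aux_realSmul_herm (c : ℝ) {M : Matrix ι ι ℂ} (h : M.IsHermitian) :
    (c • M).IsHermitian := by
  unfold Matrix.IsHermitian at *
  ext i j
  have := congrFun (congrFun h i) j
  simp only [conjTranspose_apply] at this ⊢
  simp [star_smul, this]

lemma aux_smul_posSemidef (c : ℝ) (hc : 0 ≤ c) {M : Matrix ι ι ℂ} (hM : M.PosSemidef) :
    (c • M).PosSemidef := by
  refine .of_dotProduct_mulVec_nonneg (aux_realSmul_herm c hM.1) fun x => ?_
  rw [smul_mulVec, dotProduct_smul]
  rw [Complex.real_smul]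
  exact mul_nonneg (Complex.zero_le_real.2 hc) (hM.dotProduct_mulVec_nonneg x)

lemma aux_proj_sub_outer (P : Matrix ι ι ℂ) (hproj : P * P = P) (hherm : P.IsHermitian)
    (v : ι → ℂ) (hv : star v ⬝ᵥ v = 1) (hPv : P *ᵥ v = v) :
    (P - vecMulVec v (star v)).PosSemidef := by
  set V := vecMulVec v (star v) with hV
  have hVh : V.IsHermitian := aux_outer_herm v
  have hMh : (P - V).IsHermitian := hherm.sub hVh
  have hPV : P * V = V := by rw [hV, aux_mul_vecMulVec, hPv]
  have hvP : star v ᵥ* P = star v := by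
    conv_lhs => rw [← hherm.eq]
    rw [← star_mulVec, hPv]
  have hVP : V * P = V := by rw [hV, aux_vecMulVec_mul, hvP]
  have hVV : V * V = V := by
    rw [hV, aux_mul_vecMulVec, aux_vecMulVec_mulVec, hv, one_smul]
  have hsq : (P - V) * (P - V) = P - V := by
    rw [sub_mul, mul_sub, mul_sub, hproj, hPV, hVP, hVV]
    abel
  have : P - V = (P - V)ᴴ * (P - V) := by rw [hMh.eq, hsq]
  rw [this]
  exact posSemidef_conjTranspose_mul_self _

-- quadratic form of an outer product
lemma aux_outer_quad (v x : ι → ℂ) :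
    star x ⬝ᵥ (vecMulVec v (star v) *ᵥ x) = (Complex.normSq (star v ⬝ᵥ x) : ℂ) := by
  rw [aux_vecMulVec_mulVec, dotProduct_smul]
  have h1 : star x ⬝ᵥ v = star (star v ⬝ᵥ x) := star_dotProduct _ _
  rw [smul_eq_mul, h1, Complex.star_def, Complex.mul_conj]

end Aux

theorem choi_no_entangled_min_eigenspace {d : ℕ} [NeZero d]
    (E : Matrix (Fin d × Fin d) (Fin d × Fin d) ℂ) (hE : E.PosSemidef)
    (hChoi : ∀ i j : Fin d,
      ∑ k : Fin d, E (k, i) (k, j) = if i = j then (d : ℂ)⁻¹ else 0)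
    (lam1 lam2 : ℝ) (hl1 : 0 < lam1) (hl12 : lam1 < lam2)
    (P₁ : Matrix (Fin d × Fin d) (Fin d × Fin d) ℂ)
    (hP1proj : P₁ * P₁ = P₁) (hP1herm : P₁.IsHermitian)
    (hEP1 : E * P₁ = (lam1 : ℂ) • P₁)
    (hgap : (E - ((lam1 : ℝ) • P₁ + (lam2 : ℝ) • (1 - P₁))).PosSemidef)
    (v vperp φ : Fin d × Fin d → ℂ)
    (hv : star v ⬝ᵥ v = 1) (hvperp : star vperp ⬝ᵥ vperp = 1)
    (hPv : P₁ *ᵥ v = v) (hPvperp : P₁ *ᵥ vperp = 0)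
    (α : ℝ) (hα0 : 0 ≤ α) (hα1 : α < 1)
    (hφ : φ = (Real.sqrt α : ℂ) • v + (Real.sqrt (1 - α) : ℂ) • vperp)
    (hent : ∀ i j : Fin d,
      ∑ k : Fin d, φ (i, k) * star (φ (j, k)) = if i = j then (d : ℂ)⁻¹ else 0) :
    lam1 < lam1 * lam2 / (lam1 + (lam2 - lam1) * α) ∧
    (E - (lam1 * lam2 / (lam1 + (lam2 - lam1) * α)) •
        Matrix.vecMulVec φ (star φ)).PosSemidef := by
  have hD : 0 < lam1 + (lam2 - lam1) * α := by nlinarith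
  set t : ℝ := lam1 * lam2 / (lam1 + (lam2 - lam1) * α) with ht
  have h1 : lam1 < t := by
    rw [ht, lt_div_iff₀ hD]
    nlinarith [mul_pos (mul_pos hl1 (sub_pos.2 hl12)) (sub_pos.2 hα1)]
  refine ⟨h1, ?_⟩
  set V := vecMulVec v (star v) with hVdef
  set W := vecMulVec vperp (star vperp) with hWdef
  set Φ := vecMulVec φ (star φ) with hΦdef
  -- PSD of the three pieces
  have hS1 : (lam1 • (P₁ - V)).PosSemidef :=
    aux_smul_posSemidef lam1 hl1.le (aux_proj_sub_outer P₁ hP1proj hP1herm v hv hPv)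
  have hQproj : (1 - P₁) * (1 - P₁) = 1 - P₁ := by
    simp only [mul_sub, sub_mul, one_mul, mul_one, hP1proj]
    abel
  have hQherm : (1 - P₁).IsHermitian := (Matrix.isHermitian_one).sub hP1herm
  have hQv : (1 - P₁) *ᵥ vperp = vperp := by
    rw [sub_mulVec, one_mulVec, hPvperp, sub_zero]
  have hS2 : (lam2 • ((1 - P₁) - W)).PosSemidef :=
    aux_smul_posSemidef lam2 (by linarith) (aux_proj_sub_outer _ hQproj hQherm vperp hvperp hQv)
  -- the 2x2 piece
  have hY : ((lam1 • V + lam2 • W) - t • Φ).PosSemidef := by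
    refine .of_dotProduct_mulVec_nonneg ?_ ?_
    · exact ((aux_realSmul_herm lam1 (aux_outer_herm v)).add
        (aux_realSmul_herm lam2 (aux_outer_herm vperp))).sub
        (aux_realSmul_herm t (aux_outer_herm φ))
    · intro x
      set a := star v ⬝ᵥ x with ha
      set b := star vperp ⬝ᵥ x with hb
      set c := star φ ⬝ᵥ x with hc
      have hform : star x ⬝ᵥ (((lam1 • V + lam2 • W) - t • Φ) *ᵥ x) =
          ((lam1 * Complex.normSq a + lam2 * Complex.normSq b - t * Complex.normSq c : ℝ) : ℂ) := by
        rw [sub_mulVec, add_mulVec, smul_mulVec, smul_mulVec, smul_mulVec,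
          dotProduct_sub, dotProduct_add, dotProduct_smul, dotProduct_smul, dotProduct_smul,
          hVdef, hWdef, hΦdef, aux_outer_quad, aux_outer_quad, aux_outer_quad, ← ha, ← hb, ← hc]
        simp only [Complex.real_smul]
        push_cast
        ring
      rw [hform]
      rw [Complex.zero_le_real]
      -- relate c to a and b
      set s := Real.sqrt α with hs
      set u := Real.sqrt (1 - α) with hu
      have hcab : c = (s : ℂ) * a + (u : ℂ) * b := by
        rw [hc, hφ, star_add, star_smul, star_smul, add_dotProduct, smul_dotProduct,
          smul_dotProduct, ← ha, ← hb]
        simp [Complex.star_def, Complex.conj_ofReal, smul_eq_mul]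
      have hs0 : 0 ≤ s := Real.sqrt_nonneg _
      have hu0 : 0 ≤ u := Real.sqrt_nonneg _
      have hs2 : s ^ 2 = α := Real.sq_sqrt hα0
      have hu2 : u ^ 2 = 1 - α := Real.sq_sqrt (by linarith)
      set A := Complex.normSq a with hA
      set B := Complex.normSq b with hB
      have hCexp : Complex.normSq c =
          s ^ 2 * A + u ^ 2 * B + 2 * (s * u) * (a * (starRingEnd ℂ) b).re := by
        rw [hcab, Complex.normSq_add]
        have h1 : ((↑s * a) * (starRingEnd ℂ) (↑u * b)).re = (s * u) * (a * (starRingEnd ℂ) b).re := by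
          rw [_root_.map_mul, Complex.conj_ofReal]
          have : (↑s * a) * (↑u * (starRingEnd ℂ) b) = ↑(s * u) * (a * (starRingEnd ℂ) b) := by
            push_cast; ring
          rw [this, Complex.re_ofReal_mul]
        rw [h1]
        simp only [Complex.normSq_mul, Complex.normSq_ofReal]
        rw [← hA, ← hB]
        ring
      have hR : (a * (starRingEnd ℂ) b).re ≤ ‖a‖ * ‖b‖ := by
        calc (a * (starRingEnd ℂ) b).re ≤ ‖a * (starRingEnd ℂ) b‖ := Complex.re_le_norm _
        _ = ‖a‖ * ‖b‖ := by rw [norm_mul, Complex.norm_conj]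
      have hAabs : (‖a‖) ^ 2 = A := Complex.sq_norm a
      have hBabs : (‖b‖) ^ 2 = B := Complex.sq_norm b
      have ha0 : 0 ≤ ‖a‖ := norm_nonneg a
      have hb0 : 0 ≤ ‖b‖ := norm_nonneg b
      have hkey : t * Complex.normSq c ≤ lam1 * A + lam2 * B := by
        rw [ht, div_mul_eq_mul_div, div_le_iff₀ hD, hCexp]
        have hlam2 : 0 < lam2 := hl1.trans hl12
        have hmul : 2 * (lam1 * lam2 * s * u) * (a * (starRingEnd ℂ) b).re ≤
            2 * (lam1 * lam2 * s * u) * (‖a‖ * ‖b‖) := by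
          apply mul_le_mul_of_nonneg_left hR
          have := mul_nonneg (mul_nonneg (mul_nonneg hl1.le hlam2.le) hs0) hu0
          linarith
        have key2 : 2 * (lam1 * lam2 * s * u) * (‖a‖ * ‖b‖) ≤
            lam1 ^ 2 * u ^ 2 * (‖a‖) ^ 2 + lam2 ^ 2 * s ^ 2 * (‖b‖) ^ 2 := by
          nlinarith [sq_nonneg (lam1 * u * ‖a‖ - lam2 * s * ‖b‖)]
        have key3 : 2 * (lam1 * lam2 * s * u) * (a * (starRingEnd ℂ) b).re ≤
            lam1 ^ 2 * (1 - α) * A + lam2 ^ 2 * α * B := by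
          rw [← hAabs, ← hBabs, ← hu2, ← hs2]
          linarith [hmul, key2]
        rw [hs2, hu2]
        nlinarith [key3]
      linarith
  -- assemble
  have hdecomp : E - t • Φ =
      (E - ((lam1 : ℝ) • P₁ + (lam2 : ℝ) • (1 - P₁))) +
      ((lam1 • (P₁ - V)) + (lam2 • ((1 - P₁) - W))) +
      ((lam1 • V + lam2 • W) - t • Φ) := by
    module
  rw [hdecomp]
  exact ((hgap.add (hS1.add hS2)).add hY)
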